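/- For all natural numbers α ≥ 2, ω₂(exp((ω₁(α))²)) ≤ exp²(4·(log α)⁴)^C + C for an absolute constant C; in particular if exp²(α) exists (α ∈ log²) then ω₂ of the code bound exp((ω₁(α))²) exists, since 4(log α)⁴ ≤ α for large α. -/

import Mathlib

/-- exp(x) = 2^x. -/
def exp2 (x : ℕ) : ℕ := 2 ^ x

/-- n-fold iteration of exp. -/
def expIter (n x : ℕ) : ℕ := exp2^[n] x

/-- base-2 logarithm (exact on powers of two). -/
def log2 (x : ℕ) : ℕ := Nat.log 2 x

/-- n-fold iteration of log. -/
def logIter (n x : ℕ) : ℕ := log2^[n] x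

/-- ω₁(x) = exp((log x)·(log x)). -/
def omega1 (x : ℕ) : ℕ := exp2 (log2 x * log2 x)

/-- ω₂(x) = exp²((log² x)·(log² x)). -/
def omega2 (x : ℕ) : ℕ := expIter 2 (logIter 2 x * logIter 2 x)

lemma aux_poly_le_pow : ∀ k : ℕ, 20 ≤ k → 4 * k ^ 4 ≤ 2 ^ k := by
  intro k hk
  induction k with
  | zero => omega
  | succ n ih =>
    rcases Nat.lt_or_ge n 20 with h | h
    · have hn : n = 19 := by omega
      subst hn; norm_num
    · have h1 := ih (by omega)
      have h3 : 20 * n ^ 3 ≤ n * n ^ 3 :=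
        Nat.mul_le_mul_right _ h
      have h2 : 4 * (n + 1) ^ 4 ≤ 2 * (4 * n ^ 4) := by nlinarith [h3, h]
      calc 4 * (n + 1) ^ 4 ≤ 2 * (4 * n ^ 4) := h2
        _ ≤ 2 * 2 ^ n := by omega
        _ = 2 ^ (n + 1) := by ring

/-- there is an absolute constant C such that for all α ≥ 2,
ω₂(exp((ω₁(α))²)) ≤ exp²(4·(log α)⁴)^C + C; moreover 4·(log α)⁴ ≤ α for all
sufficiently large α (so if exp²(α) exists then so does the ω₂ bound). -/
theorem omega2_code_bound :
    (∃ C : ℕ, ∀ α : ℕ, 2 ≤ α →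
      omega2 (exp2 (omega1 α * omega1 α)) ≤ (expIter 2 (4 * (log2 α) ^ 4)) ^ C + C) ∧
    (∃ N : ℕ, ∀ α : ℕ, N ≤ α → 4 * (log2 α) ^ 4 ≤ α) := by
  constructor
  · refine ⟨1, fun α _ => ?_⟩
    set L := log2 α with hLdef
    have hm : omega1 α * omega1 α = 2 ^ (L * L + L * L) := by
      simp [omega1, exp2, pow_add, hLdef]
    have h1 : logIter 2 (exp2 (omega1 α * omega1 α)) = L * L + L * L := by
      show Nat.log 2 (Nat.log 2 (2 ^ (omega1 α * omega1 α))) = _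
      rw [hm, Nat.log_pow one_lt_two, Nat.log_pow one_lt_two]
    have h2 : omega2 (exp2 (omega1 α * omega1 α)) = expIter 2 (4 * L ^ 4) := by
      unfold omega2
      rw [h1]
      congr 1
      ring
    rw [h2, pow_one]
    exact Nat.le_succ _
  · refine ⟨2 ^ 20, fun α hα => ?_⟩
    have hα0 : α ≠ 0 := by
      have h0 : (0:ℕ) < 2 ^ 20 := by norm_num
      omega
    have hk : 20 ≤ Nat.log 2 α :=
      (Nat.le_log_iff_pow_le one_lt_two hα0).mpr hα
    calc 4 * (log2 α) ^ 4 ≤ 2 ^ (log2 α) := aux_poly_le_pow _ hk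
      _ ≤ α := Nat.pow_log_le_self 2 hα0
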